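/- In the minimum-maximal-matching reduction market (buyers = left vertices with budget 1, items = right vertices with price 1, v_{i,j} = 1 iff (i,j) is an edge), for every stable (possibly fractional) allocation x with total revenue T, there exists an integral stable allocation (maximal matching) with revenue (cardinality) at most T. Consequently, the minimum revenue over all stable allocations equals the size of a minimum maximal matching of the bipartite graph. -/

import Mathlib

open Finset

/-- Stability in the market constructed from a bipartite graph `E` with unit
budgets and unit prices. -/
def StableGraph {I J : Type*} [Fintype I] [Fintype J]
    (E : I → J → Prop) (x : I → J → ℝ) : Prop :=
  (∀ i j, 0 ≤ x i j ∧ x i j ≤ 1) ∧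
  (∀ j, ∑ i, x i j ≤ 1) ∧
  (∀ i, ∑ j, x i j ≤ 1) ∧
  (∀ i j, 0 < x i j → E i j) ∧
  ¬ ∃ i j, E i j ∧ (∑ i', x i' j) < 1 ∧ (∑ j', x i j') < 1

/-- A maximal matching of `(I, J, E)` as a finite set of edges. -/
def MaximalMatching {I J : Type*} [DecidableEq I] [DecidableEq J]
    (E : I → J → Prop) (M : Finset (I × J)) : Prop :=
  (∀ e ∈ M, E e.1 e.2) ∧
  (∀ e ∈ M, ∀ e' ∈ M, e ≠ e' → e.1 ≠ e'.1 ∧ e.2 ≠ e'.2) ∧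
  (∀ i j, E i j → (∃ j', (i, j') ∈ M) ∨ ∃ i', (i', j) ∈ M)

lemma aux_stable_of_mm {I J : Type*} [Fintype I] [Fintype J]
    [DecidableEq I] [DecidableEq J]
    (E : I → J → Prop) (M : Finset (I × J)) (hM : MaximalMatching E M) :
    StableGraph E (fun i j => if (i, j) ∈ M then (1 : ℝ) else 0) ∧
      (∑ i, ∑ j, (if (i, j) ∈ M then (1 : ℝ) else 0)) = M.card := by
  classical
  obtain ⟨hE, hinj, hmax⟩ := hM
  have hcol : ∀ j, ∑ i, (if (i, j) ∈ M then (1:ℝ) else 0) ≤ 1 := by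
    intro j
    rw [Finset.sum_boole]
    have : ({i | (i, j) ∈ M} : Finset I).card ≤ 1 := by
      refine Finset.card_le_one.2 fun a ha b hb => ?_
      simp only [mem_filter, mem_univ, true_and] at ha hb
      by_contra hab
      exact (hinj _ ha _ hb (by simp [hab])).2 rfl
    exact_mod_cast this
  have hrow : ∀ i, ∑ j, (if (i, j) ∈ M then (1:ℝ) else 0) ≤ 1 := by
    intro i
    rw [Finset.sum_boole]
    have : ({j | (i, j) ∈ M} : Finset J).card ≤ 1 := by
      refine Finset.card_le_one.2 fun a ha b hb => ?_
      simp only [mem_filter, mem_univ, true_and] at ha hb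
      by_contra hab
      exact (hinj _ ha _ hb (by simp [hab])).1 rfl
    exact_mod_cast this
  refine ⟨⟨fun i j => by by_cases h : (i, j) ∈ M <;> simp [h], hcol, hrow,
      fun i j h => ?_, ?_⟩, ?_⟩
  · dsimp only at h
    split at h
    · exact hE _ (by assumption)
    · norm_num at h
  · rintro ⟨i, j, hEij, h1, h2⟩
    dsimp only at h1 h2
    rcases hmax i j hEij with ⟨j', hj'⟩ | ⟨i', hi'⟩
    · have : (1:ℝ) ≤ ∑ j'', (if (i, j'') ∈ M then (1:ℝ) else 0) := by
        have := Finset.single_le_sum (f := fun j'' => if (i, j'') ∈ M then (1:ℝ) else 0)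
          (fun k _ => by split <;> norm_num) (Finset.mem_univ j')
        simpa [hj'] using this
      linarith
    · have : (1:ℝ) ≤ ∑ i'', (if (i'', j) ∈ M then (1:ℝ) else 0) := by
        have := Finset.single_le_sum (f := fun i'' => if (i'', j) ∈ M then (1:ℝ) else 0)
          (fun k _ => by split <;> norm_num) (Finset.mem_univ i')
        simpa [hi'] using this
      linarith
  · have h2 : (∑ p : I × J, if p ∈ M then (1:ℝ) else 0) = ((univ.filter (· ∈ M)).card : ℝ) :=
      Finset.sum_boole _ _
    rw [Fintype.sum_prod_type] at h2
    simp only [Finset.filter_univ_mem] at h2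
    simpa using h2

lemma aux_exists_mm_le {I J : Type*} [Fintype I] [Fintype J]
    [DecidableEq I] [DecidableEq J]
    (E : I → J → Prop) (x : I → J → ℝ) (hx : StableGraph E x) :
    ∃ M : Finset (I × J), MaximalMatching E M ∧ (M.card : ℝ) ≤ ∑ i, ∑ j, x i j := by
  classical
  obtain ⟨hb, hcol, hrow, hsupp, hstab⟩ := hx
  set A : Matrix (I ⊕ J) (I ⊕ J) ℝ :=
    Sum.elim
      (fun i => Sum.elim (fun i' => if i = i' then 1 - ∑ j, x i j else 0) (fun j => x i j))
      (fun j => Sum.elim (fun i => x i j) (fun j' => if j = j' then 1 - ∑ i, x i j else 0))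
    with hAdef
  have hA : A ∈ doublyStochastic ℝ (I ⊕ J) := by
    rw [mem_doublyStochastic_iff_sum]
    refine ⟨?_, ?_, ?_⟩
    · rintro (i | j) (i' | j')
      · simp only [hAdef, Sum.elim_inl]
        split
        · linarith [hrow i]
        · exact le_refl _
      · exact (hb i j').1
      · exact (hb i' j).1
      · simp only [hAdef, Sum.elim_inr]
        split
        · linarith [hcol j]
        · exact le_refl _
    · rintro (i | j)
      · rw [Fintype.sum_sum_type]
        simp only [hAdef, Sum.elim_inl, Sum.elim_inr]
        rw [Finset.sum_ite_eq Finset.univ i (fun _ => 1 - ∑ j, x i j)]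
        simp
      · rw [Fintype.sum_sum_type]
        simp only [hAdef, Sum.elim_inl, Sum.elim_inr]
        rw [Finset.sum_ite_eq Finset.univ j (fun _ => 1 - ∑ i, x i j)]
        simp
    · rintro (i | j)
      · rw [Fintype.sum_sum_type]
        simp only [hAdef, Sum.elim_inl, Sum.elim_inr]
        rw [Finset.sum_ite_eq' Finset.univ i (fun i' => 1 - ∑ j, x i' j)]
        simp
      · rw [Fintype.sum_sum_type]
        simp only [hAdef, Sum.elim_inl, Sum.elim_inr]
        rw [Finset.sum_ite_eq' Finset.univ j (fun j' => 1 - ∑ i, x i j')]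
        simp
  obtain ⟨w, hw0, hw1, hwA⟩ := exists_eq_sum_perm_of_mem_doublyStochastic hA
  have hAe : ∀ u v, A u v = ∑ σ : Equiv.Perm (I ⊕ J), w σ * (if σ u = v then 1 else 0) := by
    intro u v
    rw [← hwA]
    simp [Matrix.sum_apply, Matrix.smul_apply, Equiv.Perm.permMatrix,
      PEquiv.toMatrix_apply, Equiv.toPEquiv_apply, Option.mem_def]
  have key : ∀ (σ : Equiv.Perm (I ⊕ J)), 0 < w σ → ∀ u v, σ u = v → w σ ≤ A u v := by
    intro σ hσ u v h
    rw [hAe]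
    calc w σ = w σ * (if σ u = v then 1 else 0) := by simp [h]
      _ ≤ ∑ σ' : Equiv.Perm (I ⊕ J), w σ' * (if σ' u = v then 1 else 0) :=
        Finset.single_le_sum
          (f := fun σ' => w σ' * (if σ' u = v then 1 else 0))
          (fun σ' _ => mul_nonneg (hw0 σ') (by split <;> norm_num))
          (Finset.mem_univ σ)
  set Fm : Equiv.Perm (I ⊕ J) → Finset (I × J) :=
    fun σ => Finset.univ.filter (fun p : I × J => σ (Sum.inl p.1) = Sum.inr p.2) with hFm
  have hcardsum : ∀ σ : Equiv.Perm (I ⊕ J),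
      (∑ i, ∑ j, (if σ (Sum.inl i) = Sum.inr j then (1:ℝ) else 0)) = ((Fm σ).card : ℝ) := by
    intro σ
    have h2 : (∑ p : I × J, if σ (Sum.inl p.1) = Sum.inr p.2 then (1:ℝ) else 0)
        = ((Fm σ).card : ℝ) := Finset.sum_boole _ _
    rw [Fintype.sum_prod_type] at h2
    simpa using h2
  have hT : ∑ i, ∑ j, x i j = ∑ σ : Equiv.Perm (I ⊕ J), w σ * ((Fm σ).card : ℝ) := by
    have h1 : ∀ i j, x i j = A (Sum.inl i) (Sum.inr j) := by
      intro i j; simp [hAdef]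
    calc ∑ i, ∑ j, x i j
        = ∑ i, ∑ j, ∑ σ : Equiv.Perm (I ⊕ J),
            w σ * (if σ (Sum.inl i) = Sum.inr j then 1 else 0) := by
          refine Finset.sum_congr rfl fun i _ => Finset.sum_congr rfl fun j _ => ?_
          rw [h1 i j, hAe]
      _ = ∑ i, ∑ σ : Equiv.Perm (I ⊕ J), ∑ j,
            w σ * (if σ (Sum.inl i) = Sum.inr j then 1 else 0) := by
          exact Finset.sum_congr rfl fun i _ => Finset.sum_comm
      _ = ∑ σ : Equiv.Perm (I ⊕ J), ∑ i, ∑ j,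
            w σ * (if σ (Sum.inl i) = Sum.inr j then 1 else 0) := Finset.sum_comm
      _ = ∑ σ : Equiv.Perm (I ⊕ J), w σ * ((Fm σ).card : ℝ) := by
          refine Finset.sum_congr rfl fun σ _ => ?_
          rw [← hcardsum σ]
          rw [Finset.mul_sum]
          exact Finset.sum_congr rfl fun i _ => (Finset.mul_sum _ _ _).symm
  have hex : ∃ σ : Equiv.Perm (I ⊕ J), 0 < w σ ∧ ((Fm σ).card : ℝ) ≤ ∑ i, ∑ j, x i j := by
    by_contra hcon
    push_neg at hcon
    obtain ⟨σ₀, hσ₀⟩ : ∃ σ : Equiv.Perm (I ⊕ J), w σ ≠ 0 := by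
      by_contra hall
      push_neg at hall
      simp [hall] at hw1
    have hσ₀' : 0 < w σ₀ := lt_of_le_of_ne (hw0 σ₀) (Ne.symm hσ₀)
    have hlt : ∑ σ : Equiv.Perm (I ⊕ J), w σ * (∑ i, ∑ j, x i j)
        < ∑ σ : Equiv.Perm (I ⊕ J), w σ * ((Fm σ).card : ℝ) := by
      refine Finset.sum_lt_sum (fun σ _ => ?_) ⟨σ₀, Finset.mem_univ σ₀, ?_⟩
      · rcases (hw0 σ).eq_or_lt with he | hp
        · simp [← he]
        · exact mul_le_mul_of_nonneg_left (hcon σ hp).le hp.le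
      · exact mul_lt_mul_of_pos_left (hcon σ₀ hσ₀') hσ₀'
    rw [← Finset.sum_mul, hw1, one_mul, ← hT] at hlt
    exact lt_irrefl _ hlt
  obtain ⟨σ, hσpos, hσle⟩ := hex
  have hedge : ∀ p ∈ Fm σ, 0 < x p.1 p.2 := by
    intro p hp
    rw [hFm, Finset.mem_filter] at hp
    have hk := key σ hσpos _ _ hp.2
    have hxe : A (Sum.inl p.1) (Sum.inr p.2) = x p.1 p.2 := by simp [hAdef]
    linarith
  have hmatch : ∀ e ∈ Fm σ, ∀ e' ∈ Fm σ, e ≠ e' → e.1 ≠ e'.1 ∧ e.2 ≠ e'.2 := by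
    intro e he e' he' hne
    rw [hFm, Finset.mem_filter] at he he'
    constructor
    · intro h1
      apply hne
      have h2 : (Sum.inr e.2 : I ⊕ J) = Sum.inr e'.2 := by rw [← he.2, ← he'.2, h1]
      exact Prod.ext h1 (Sum.inr.inj h2)
    · intro h2
      apply hne
      have h1 : σ (Sum.inl e.1) = σ (Sum.inl e'.1) := by rw [he.2, he'.2, h2]
      exact Prod.ext (Sum.inl.inj (σ.injective h1)) h2
  have hmaxm : ∀ i j, E i j → (∃ j', (i, j') ∈ Fm σ) ∨ ∃ i', (i', j) ∈ Fm σ := by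
    intro i j hEij
    have hsat : ∑ i', x i' j = 1 ∨ ∑ j', x i j' = 1 := by
      by_contra hcc
      push_neg at hcc
      exact hstab ⟨i, j, hEij, lt_of_le_of_ne (hcol j) hcc.1, lt_of_le_of_ne (hrow i) hcc.2⟩
    rcases hsat with hc | hr
    · right
      rcases hu : σ.symm (Sum.inr j) with i' | j'
      · refine ⟨i', ?_⟩
        rw [hFm, Finset.mem_filter]
        refine ⟨Finset.mem_univ _, ?_⟩
        rw [← hu, Equiv.apply_symm_apply]
      · exfalso
        have h1 : σ (Sum.inr j') = Sum.inr j := by rw [← hu, Equiv.apply_symm_apply]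
        have h2 := key σ hσpos _ _ h1
        have h3 : A (Sum.inr j') (Sum.inr j) ≤ 0 := by
          simp only [hAdef, Sum.elim_inr]
          split
          · next hjj => rw [hjj]; linarith [hc]
          · exact le_refl _
        linarith
    · left
      rcases hv : σ (Sum.inl i) with i' | j'
      · exfalso
        have h2 := key σ hσpos _ _ hv
        have h3 : A (Sum.inl i) (Sum.inl i') ≤ 0 := by
          simp only [hAdef, Sum.elim_inl]
          split
          · linarith [hr]
          · exact le_refl _
        linarith
      · refine ⟨j', ?_⟩
        rw [hFm, Finset.mem_filter]
        exact ⟨Finset.mem_univ _, hv⟩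
  exact ⟨Fm σ, ⟨fun e he => hsupp _ _ (hedge e he), hmatch, hmaxm⟩, hσle⟩

theorem stmt_7 {I J : Type*} [Fintype I] [Fintype J]
    [DecidableEq I] [DecidableEq J]
    (E : I → J → Prop) (x : I → J → ℝ) (hx : StableGraph E x) :
    (∃ y : I → J → ℝ, StableGraph E y ∧ (∀ i j, y i j = 0 ∨ y i j = 1) ∧
      (∑ i, ∑ j, y i j) ≤ ∑ i, ∑ j, x i j) ∧
    sInf {r : ℝ | ∃ z, StableGraph E z ∧ r = ∑ i, ∑ j, z i j} =
      sInf {r : ℝ | ∃ M : Finset (I × J), MaximalMatching E M ∧ r = M.card} := by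
  classical
  obtain ⟨M₀, hM₀, hle₀⟩ := aux_exists_mm_le E x hx
  obtain ⟨hstab₀, hrev₀⟩ := aux_stable_of_mm E M₀ hM₀
  constructor
  · refine ⟨fun i j => if (i, j) ∈ M₀ then (1:ℝ) else 0, hstab₀,
      fun i j => by by_cases h : (i, j) ∈ M₀ <;> simp [h], ?_⟩
    rw [hrev₀]
    exact hle₀
  · have hbdd1 : BddBelow {r : ℝ | ∃ z, StableGraph E z ∧ r = ∑ i, ∑ j, z i j} := by
      refine ⟨0, ?_⟩
      rintro r ⟨z, hz, rfl⟩
      exact Finset.sum_nonneg fun i _ => Finset.sum_nonneg fun j _ => (hz.1 i j).1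
    have hbdd2 : BddBelow {r : ℝ | ∃ M : Finset (I × J), MaximalMatching E M ∧ r = M.card} := by
      refine ⟨0, ?_⟩
      rintro r ⟨M, hM, rfl⟩
      exact Nat.cast_nonneg _
    have hsub : {r : ℝ | ∃ M : Finset (I × J), MaximalMatching E M ∧ r = M.card}
        ⊆ {r : ℝ | ∃ z, StableGraph E z ∧ r = ∑ i, ∑ j, z i j} := by
      rintro r ⟨M, hM, rfl⟩
      obtain ⟨hst, hrev⟩ := aux_stable_of_mm E M hM
      exact ⟨_, hst, hrev.symm⟩
    have h2ne : {r : ℝ | ∃ M : Finset (I × J), MaximalMatching E M ∧ r = M.card}.Nonempty :=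
      ⟨(M₀.card : ℝ), M₀, hM₀, rfl⟩
    have h1ne : {r : ℝ | ∃ z, StableGraph E z ∧ r = ∑ i, ∑ j, z i j}.Nonempty :=
      ⟨_, x, hx, rfl⟩
    refine le_antisymm (csInf_le_csInf hbdd1 h2ne hsub) ?_
    refine le_csInf h1ne ?_
    rintro r ⟨z, hz, rfl⟩
    obtain ⟨M, hM, hle⟩ := aux_exists_mm_le E z hz
    exact (csInf_le hbdd2 ⟨M, hM, rfl⟩).trans hle
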